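/- For all x ∈ ℝ and t > 0, the pointwise estimate |K₀(x,t)| ≤ (e^{−x²/(4εt)}/(2√(πεt))) · [ e^{−at} + b t E(t) ] holds. -/

import Mathlib

open MeasureTheory Real Set

noncomputable def J1 (z : ℝ) : ℝ :=
  ∑' k : ℕ, ((-1 : ℝ) ^ k / ((Nat.factorial k : ℝ) * (Nat.factorial (k + 1) : ℝ)))
    * (z / 2) ^ (2 * k + 1)

lemma wallis_prod (m : ℕ) :
    (∏ i ∈ Finset.range m, ((2 * (i:ℝ) + 1) / (2 * i + 2))) =
      (Nat.factorial (2*m) : ℝ) / (4 ^ m * (Nat.factorial m : ℝ)^2) := by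
  induction m with
  | zero => simp
  | succ k ih =>
    have h1 : (Nat.factorial (2*(k+1)) : ℝ)
        = (2*(k:ℝ)+2)*((2*k+1)* Nat.factorial (2*k)) := by
      rw [show 2*(k+1) = (2*k+1)+1 from by ring, Nat.factorial_succ, Nat.factorial_succ]
      push_cast; ring
    have h2 : (Nat.factorial (k+1) : ℝ) = ((k:ℝ)+1) * Nat.factorial k := by
      rw [Nat.factorial_succ]; push_cast; ring
    have hk : (Nat.factorial k : ℝ) ≠ 0 := Nat.cast_ne_zero.2 (Nat.factorial_ne_zero k)
    have h4 : (4:ℝ)^k ≠ 0 := by positivity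
    have hk1 : ((k:ℝ)+1) ≠ 0 := by positivity
    rw [Finset.prod_range_succ, ih, h1, h2]
    push_cast
    field_simp
    ring

lemma hasSum_J1_integral (z : ℝ) :
    HasSum (fun k : ℕ => ((-1 : ℝ) ^ k / ((Nat.factorial k : ℝ) * (Nat.factorial (k + 1) : ℝ)))
        * (z / 2) ^ (2 * k + 1))
      ((1/π) * ∫ θ in (0:ℝ)..π, Real.sin θ * Real.sin (z * Real.sin θ)) := by
  set μ := volume.restrict (Ioc (0:ℝ) π) with hμ
  set F : ℕ → ℝ → ℝ := fun k θ =>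
    ((-1:ℝ)^k * z^(2*k+1) / (Nat.factorial (2*k+1) : ℝ)) * Real.sin θ ^ (2*k+2) with hF
  have hFcont : ∀ k, Continuous (F k) := by
    intro k; exact continuous_const.mul ((Real.continuous_sin).pow _)
  have hF_int : ∀ k, Integrable (F k) μ :=
    fun k => (hFcont k).integrableOn_Ioc
  have hC : Summable (fun k : ℕ => |z|^(2*k+1) / (Nat.factorial (2*k+1) : ℝ) * π) := by
    apply Summable.mul_right
    exact (Real.summable_pow_div_factorial |z|).comp_injective
      (fun m n h => by simpa using h)
  have hF_sum : Summable fun k => ∫ θ, ‖F k θ‖ ∂μ := by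
    apply Summable.of_nonneg_of_le (fun k => integral_nonneg (fun θ => norm_nonneg _)) _ hC
    intro k
    have hb : ∀ θ, ‖F k θ‖ ≤ |z|^(2*k+1) / (Nat.factorial (2*k+1) : ℝ) := by
      intro θ
      have hs1 : |Real.sin θ| ≤ 1 := abs_le.mpr ⟨Real.neg_one_le_sin θ, Real.sin_le_one θ⟩
      calc ‖F k θ‖ = |(-1:ℝ)^k * z^(2*k+1) / (Nat.factorial (2*k+1):ℝ)|
              * |Real.sin θ ^ (2*k+2)| := by rw [Real.norm_eq_abs, hF, abs_mul]
        _ ≤ |(-1:ℝ)^k * z^(2*k+1) / (Nat.factorial (2*k+1):ℝ)| * 1 := by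
            apply mul_le_mul_of_nonneg_left _ (abs_nonneg _)
            rw [abs_pow]; exact pow_le_one₀ (abs_nonneg _) hs1
        _ = |z|^(2*k+1) / (Nat.factorial (2*k+1):ℝ) := by
            rw [mul_one, abs_div, abs_mul, abs_pow, abs_pow, abs_neg, abs_one, one_pow,
              one_mul, Nat.abs_cast]
    calc ∫ θ, ‖F k θ‖ ∂μ
        ≤ ∫ _θ, |z|^(2*k+1) / (Nat.factorial (2*k+1):ℝ) ∂μ :=
          integral_mono (hF_int k).norm (integrable_const _) (fun θ => hb θ)
      _ = |z|^(2*k+1) / (Nat.factorial (2*k+1):ℝ) * π := by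
          rw [integral_const]
          simp [hμ, Real.volume_Ioc, ENNReal.toReal_ofReal Real.pi_pos.le, smul_eq_mul,
            mul_comm, Real.pi_pos.le]
  have key := hasSum_integral_of_summable_integral_norm hF_int hF_sum
  have htsum : ∀ θ : ℝ, (∑' k, F k θ) = Real.sin θ * Real.sin (z * Real.sin θ) := by
    intro θ
    have h := (Real.hasSum_sin (z * Real.sin θ)).mul_left (Real.sin θ)
    have heq : (fun k : ℕ => Real.sin θ * ((-1)^k * (z * Real.sin θ)^(2*k+1) / (Nat.factorial (2*k+1):ℝ)))
        = fun k => F k θ := by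
      funext k
      rw [hF]; dsimp only; rw [mul_pow]; ring
    rw [← heq]
    exact h.tsum_eq
  have hInt : ∀ k : ℕ, (∫ θ, F k θ ∂μ)
      = ((-1:ℝ)^k * z^(2*k+1) / (Nat.factorial (2*k+1) : ℝ)) *
        (π * ((Nat.factorial (2*(k+1)) : ℝ) / (4^(k+1) * (Nat.factorial (k+1) : ℝ)^2))) := by
    intro k
    have h0 : (∫ θ, F k θ ∂μ) = ∫ θ in (0:ℝ)..π, F k θ := by
      rw [intervalIntegral.integral_of_le Real.pi_pos.le]
    rw [h0, hF]
    dsimp only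
    rw [intervalIntegral.integral_const_mul]
    congr 1
    rw [show 2*k+2 = 2*(k+1) from by ring, integral_sin_pow_even, wallis_prod]
  have hIoc : (∫ θ in (0:ℝ)..π, Real.sin θ * Real.sin (z * Real.sin θ))
      = ∫ θ, (∑' k, F k θ) ∂μ := by
    rw [intervalIntegral.integral_of_le Real.pi_pos.le]
    exact integral_congr_ae (Filter.Eventually.of_forall (fun θ => (htsum θ).symm))
  rw [hIoc]
  have key2 := key.mul_left (1/π)
  convert key2 using 2 with k
  case e'_3 => rfl
  rw [hInt k]
  have hπ : (π:ℝ) ≠ 0 := Real.pi_ne_zero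
  set A := (Nat.factorial (2*k) : ℝ) with hA
  set B := (Nat.factorial k : ℝ) with hB
  have hA0 : A ≠ 0 := Nat.cast_ne_zero.2 (Nat.factorial_ne_zero _)
  have hB0 : B ≠ 0 := Nat.cast_ne_zero.2 (Nat.factorial_ne_zero _)
  have h1 : (Nat.factorial (2*(k+1)) : ℝ) = (2*(k:ℝ)+2)*((2*(k:ℝ)+1)*A) := by
    rw [show 2*(k+1) = (2*k+1)+1 from by ring, Nat.factorial_succ, Nat.factorial_succ, hA]
    push_cast; ring
  have h2 : (Nat.factorial (k+1) : ℝ) = ((k:ℝ)+1)*B := by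
    rw [Nat.factorial_succ, hB]; push_cast; ring
  have h3 : (Nat.factorial (2*k+1) : ℝ) = (2*(k:ℝ)+1)*A := by
    rw [Nat.factorial_succ, hA]; push_cast; ring
  have hz : (z/2)^(2*k+1) = z^(2*k+1)/(2*4^k) := by
    rw [div_pow]; congr 1
    rw [pow_succ, pow_mul]; norm_num; ring
  rw [h1, h2, h3, hz]
  have h4 : (4:ℝ)^k ≠ 0 := by positivity
  have hk1 : ((k:ℝ)+1) ≠ 0 := by positivity
  have hk2 : (2*(k:ℝ)+1) ≠ 0 := by positivity
  field_simp
  ring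

lemma J1_eq_integral (z : ℝ) :
    J1 z = (1/π) * ∫ θ in (0:ℝ)..π, Real.sin θ * Real.sin (z * Real.sin θ) :=
  (hasSum_J1_integral z).tsum_eq

lemma abs_J1_le (z : ℝ) : |J1 z| ≤ |z| / 2 := by
  rw [J1_eq_integral]
  have hb : ∀ θ ∈ Set.uIoc (0:ℝ) π, ‖Real.sin θ * Real.sin (z * Real.sin θ)‖ ≤ |z| * Real.sin θ ^ 2 := by
    intro θ hθ
    rw [Set.uIoc_of_le Real.pi_pos.le] at hθ
    have hs : 0 ≤ Real.sin θ := Real.sin_nonneg_of_nonneg_of_le_pi hθ.1.le hθ.2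
    calc ‖Real.sin θ * Real.sin (z * Real.sin θ)‖
        = |Real.sin θ| * |Real.sin (z * Real.sin θ)| := by rw [Real.norm_eq_abs, abs_mul]
      _ ≤ |Real.sin θ| * |z * Real.sin θ| :=
          mul_le_mul_of_nonneg_left (Real.abs_sin_le_abs) (abs_nonneg _)
      _ = |z| * Real.sin θ ^ 2 := by
          rw [abs_mul, abs_of_nonneg hs]; ring
  have hg : IntervalIntegrable (fun θ => |z| * Real.sin θ ^ 2) volume 0 π :=
    (continuous_const.mul (Real.continuous_sin.pow 2)).intervalIntegrable _ _
  have h := intervalIntegral.norm_integral_le_of_norm_le Real.pi_pos.le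
    (Filter.Eventually.of_forall (fun θ hθ => hb θ (by rwa [Set.uIoc_of_le Real.pi_pos.le]))) hg
  have hval : (∫ θ in (0:ℝ)..π, |z| * Real.sin θ ^ 2) = |z| * (π/2) := by
    rw [intervalIntegral.integral_const_mul, integral_sin_sq]
    simp
  rw [hval] at h
  have hπ : 0 < π := Real.pi_pos
  calc |(1/π) * ∫ θ in (0:ℝ)..π, Real.sin θ * Real.sin (z * Real.sin θ)|
      = (1/π) * ‖∫ θ in (0:ℝ)..π, Real.sin θ * Real.sin (z * Real.sin θ)‖ := by
        rw [abs_mul, abs_of_nonneg (by positivity : (0:ℝ) ≤ 1/π), Real.norm_eq_abs]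
    _ ≤ (1/π) * |(|z| * (π/2))| := by
        apply mul_le_mul_of_nonneg_left (h.trans (le_abs_self _)) (by positivity)
    _ = |z| / 2 := by
        rw [abs_of_nonneg (by positivity : (0:ℝ) ≤ |z| * (π/2))]
        field_simp

lemma alg_aux (S T q r E sb b : ℝ) (hS : S ≠ 0) (hT : T ≠ 0) (hsb : sb*sb = b) :
    1/(2*S) * (q*r/T + sb*(sb*T*q*E)) = q/(2*(S*T))*(r + b*(T*T)*E) := by
  subst hsb
  field_simp

noncomputable def K0 (a b ε β x t : ℝ) : ℝ :=
  (1 / (2 * Real.sqrt (π * ε))) *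
    (Real.exp (-(x ^ 2 / (4 * ε * t)) - a * t) / Real.sqrt t
      - Real.sqrt b * ∫ y in (0:ℝ)..t,
          Real.exp (-(x ^ 2 / (4 * ε * y)) - a * y - β * (t - y)) / Real.sqrt (t - y)
            * J1 (2 * Real.sqrt (b * y * (t - y))))

set_option maxHeartbeats 1000000 in
/-- pointwise estimate
`|K₀(x,t)| ≤ (e^{−x²/(4εt)}/(2√(πεt)))·[e^{−at} + b t E(t)]` with
`E(t) = (e^{−βt} − e^{−at})/(a−β)`. -/
theorem K0_pointwise_estimate (a b ε β : ℝ) (ha : 0 < a) (hb : 0 < b) (hε : 0 < ε)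
    (hβ : 0 < β) (hab : a ≠ β) (x t : ℝ) (ht : 0 < t) :
    |K0 a b ε β x t| ≤
      Real.exp (-(x ^ 2) / (4 * ε * t)) / (2 * Real.sqrt (π * ε * t)) *
        (Real.exp (-a * t)
          + b * t * ((Real.exp (-β * t) - Real.exp (-a * t)) / (a - β))) := by
  have hπε : 0 < π * ε := mul_pos Real.pi_pos hε
  have hS0 : 0 < Real.sqrt (π * ε) := Real.sqrt_pos.2 hπε
  have hT0 : 0 < Real.sqrt t := Real.sqrt_pos.2 ht
  set S := Real.sqrt (π * ε) with hS
  set T := Real.sqrt t with hT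
  have hTT : T * T = t := Real.mul_self_sqrt ht.le
  set c := x^2/(4*ε*t) with hc
  set E := (Real.exp (-β*t) - Real.exp (-a*t))/(a-β) with hE
  have hE0 : 0 ≤ E := by
    rcases lt_or_gt_of_ne hab with h | h
    · rw [hE, show (Real.exp (-β*t) - Real.exp (-a*t))/(a-β)
          = (Real.exp (-a*t) - Real.exp (-β*t))/(β-a) from by
        rw [← neg_div_neg_eq]; ring_nf]
      apply div_nonneg _ (by linarith)
      have : Real.exp (-β*t) ≤ Real.exp (-a*t) := by
        apply Real.exp_le_exp.2; nlinarith
      linarith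
    · apply div_nonneg _ (by linarith)
      have : Real.exp (-a*t) ≤ Real.exp (-β*t) := by
        apply Real.exp_le_exp.2; nlinarith
      linarith
  set C := Real.sqrt b * T * Real.exp (-c) with hC
  have hC0 : 0 ≤ C := by positivity
  have hba : β - a ≠ 0 := sub_ne_zero.2 (Ne.symm hab)
  have hab' : a - β ≠ 0 := sub_ne_zero.2 hab
  have hint : (∫ y in (0:ℝ)..t, C * Real.exp (-a*y - β*(t-y))) = C * E := by
    rw [intervalIntegral.integral_const_mul]
    congr 1
    have heq : ∀ y ∈ uIcc (0:ℝ) t, Real.exp (-a*y - β*(t-y))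
        = Real.exp (-β*t) * Real.exp ((β-a)*y) := by
      intro y _; rw [← Real.exp_add]; ring_nf
    rw [intervalIntegral.integral_congr heq, intervalIntegral.integral_const_mul]
    have hd : ∀ y : ℝ, HasDerivAt (fun u => Real.exp ((β-a)*u)/(β-a))
        (Real.exp ((β-a)*y)) y := by
      intro y
      have h1 : HasDerivAt (fun u : ℝ => (β-a)*u) (β-a) y := by
        simpa using (hasDerivAt_id y).const_mul (β-a)
      have h2 := (h1.exp).div_const (β-a)
      convert h2 using 1
      all_goals try rfl
      rw [mul_div_assoc, div_self hba, mul_one]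
    have hie : (∫ y in (0:ℝ)..t, Real.exp ((β-a)*y))
        = Real.exp ((β-a)*t)/(β-a) - Real.exp ((β-a)*0)/(β-a) :=
      intervalIntegral.integral_eq_sub_of_hasDerivAt (fun y _ => hd y)
        ((Real.continuous_exp.comp (continuous_const.mul continuous_id)).intervalIntegrable _ _)
    rw [hie, hE]
    have h3 : Real.exp (-β*t) * Real.exp ((β-a)*t) = Real.exp (-a*t) := by
      rw [← Real.exp_add]; ring_nf
    rw [mul_zero, Real.exp_zero]
    simp only [neg_mul] at h3 ⊢
    field_simp
    rw [mul_comm t (β-a), mul_comm t a]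
    linear_combination (a-β) * h3
  have hbound : ∀ y ∈ Set.uIoc (0:ℝ) t,
      ‖Real.exp (-(x ^ 2 / (4 * ε * y)) - a * y - β * (t - y)) / Real.sqrt (t - y)
        * J1 (2 * Real.sqrt (b * y * (t - y)))‖ ≤ C * Real.exp (-a*y - β*(t-y)) := by
    intro y hy
    rw [Set.uIoc_of_le ht.le] at hy
    obtain ⟨hy1, hy2⟩ := hy
    rcases eq_or_lt_of_le hy2 with rfl | hlt
    · simp only [sub_self, Real.sqrt_zero, div_zero, zero_mul, norm_zero]
      positivity
    · have hs : 0 < t - y := by linarith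
      have hsq : 0 < Real.sqrt (t - y) := Real.sqrt_pos.2 hs
      have hby : (0:ℝ) ≤ b * y := by positivity
      have hJ : |J1 (2 * Real.sqrt (b * y * (t - y)))| ≤ Real.sqrt (b * y * (t - y)) := by
        refine (abs_J1_le _).trans ?_
        rw [abs_of_nonneg (by positivity)]
        ring_nf
        linarith [Real.sqrt_nonneg (b * y * (t-y))]
      calc ‖Real.exp (-(x ^ 2 / (4 * ε * y)) - a * y - β * (t - y)) / Real.sqrt (t - y)
              * J1 (2 * Real.sqrt (b * y * (t - y)))‖
          = Real.exp (-(x ^ 2 / (4 * ε * y)) - a * y - β * (t - y)) / Real.sqrt (t - y)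
              * |J1 (2 * Real.sqrt (b * y * (t - y)))| := by
            rw [Real.norm_eq_abs, abs_mul]
            congr 1
            rw [abs_of_nonneg (by positivity)]
        _ ≤ Real.exp (-(x ^ 2 / (4 * ε * y)) - a * y - β * (t - y)) / Real.sqrt (t - y)
              * Real.sqrt (b * y * (t - y)) := by
            apply mul_le_mul_of_nonneg_left hJ (by positivity)
        _ = Real.exp (-(x ^ 2 / (4 * ε * y)) - a * y - β * (t - y)) * Real.sqrt (b * y) := by
            rw [Real.sqrt_mul hby]
            field_simp
        _ = Real.exp (-(x ^ 2 / (4 * ε * y))) * Real.exp (- a * y - β * (t - y))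
              * Real.sqrt (b * y) := by
            rw [← Real.exp_add]; ring_nf
        _ ≤ Real.exp (-c) * Real.exp (- a * y - β * (t - y)) * (Real.sqrt b * T) := by
            have h1 : Real.exp (-(x ^ 2 / (4 * ε * y))) ≤ Real.exp (-c) := by
              apply Real.exp_le_exp.2
              apply neg_le_neg
              rw [hc]
              exact div_le_div_of_nonneg_left (sq_nonneg x) (by positivity) (by nlinarith)
            have h2 : Real.sqrt (b * y) ≤ Real.sqrt b * T := by
              rw [Real.sqrt_mul hb.le, hT]
              exact mul_le_mul_of_nonneg_left (Real.sqrt_le_sqrt hy2) (Real.sqrt_nonneg b)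
            exact mul_le_mul (mul_le_mul_of_nonneg_right h1 (Real.exp_pos _).le) h2
              (Real.sqrt_nonneg _) (by positivity)
        _ = C * Real.exp (-a*y - β*(t-y)) := by rw [hC]; ring
  have hIb : |∫ y in (0:ℝ)..t, Real.exp (-(x ^ 2 / (4 * ε * y)) - a * y - β * (t - y))
      / Real.sqrt (t - y) * J1 (2 * Real.sqrt (b * y * (t - y)))| ≤ C * E := by
    have hgc : Continuous fun y => C * Real.exp (-a*y - β*(t-y)) := by
      apply continuous_const.mul
      exact Real.continuous_exp.comp (by continuity)
    have h := intervalIntegral.norm_integral_le_of_norm_le (μ := volume) ht.le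
      (Filter.Eventually.of_forall (fun y hy => hbound y (by rwa [Set.uIoc_of_le ht.le])))
      (hgc.intervalIntegrable (μ := volume) 0 t)
    rw [hint, Real.norm_eq_abs] at h
    exact h
  rw [K0]
  set I := ∫ y in (0:ℝ)..t, Real.exp (-(x ^ 2 / (4 * ε * y)) - a * y - β * (t - y))
      / Real.sqrt (t - y) * J1 (2 * Real.sqrt (b * y * (t - y))) with hI
  have hA : (0:ℝ) ≤ Real.exp (-c - a * t) / T := by positivity
  have step1 : |1 / (2 * S) * (Real.exp (-c - a * t) / T - Real.sqrt b * I)|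
      ≤ 1 / (2 * S) * (Real.exp (-c - a * t) / T + Real.sqrt b * (C * E)) := by
    rw [abs_mul, abs_of_nonneg (by positivity : (0:ℝ) ≤ 1/(2*S))]
    apply mul_le_mul_of_nonneg_left _ (by positivity)
    calc |Real.exp (-c - a * t) / T - Real.sqrt b * I|
        ≤ |Real.exp (-c - a * t) / T| + |Real.sqrt b * I| := abs_sub _ _
      _ = Real.exp (-c - a * t) / T + Real.sqrt b * |I| := by
          rw [abs_of_nonneg hA, abs_mul, abs_of_nonneg (Real.sqrt_nonneg b)]
      _ ≤ Real.exp (-c - a * t) / T + Real.sqrt b * (C * E) := by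
          have := mul_le_mul_of_nonneg_left hIb (Real.sqrt_nonneg b)
          linarith
  refine step1.trans_eq ?_
  have hsqrtb : Real.sqrt b * Real.sqrt b = b := Real.mul_self_sqrt hb.le
  have hsplit : Real.exp (-c - a * t) = Real.exp (-c) * Real.exp (-a * t) := by
    rw [← Real.exp_add]; ring_nf
  have hnd : -(x^2)/(4*ε*t) = -c := by rw [hc]; ring
  have hst : Real.sqrt (π * ε * t) = S * T := by
    rw [hS, hT, show π * ε * t = (π*ε)*t from by ring, Real.sqrt_mul hπε.le]
  have hSne : S ≠ 0 := hS0.ne'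
  have hTne : T ≠ 0 := hT0.ne'
  rw [hnd, hst, hsplit, hC, ← hTT]
  exact alg_aux S T (Real.exp (-c)) (Real.exp (-a*(T*T))) E (Real.sqrt b) b hSne hTne hsqrtb
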